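/- Assume the boundary condition ω satisfies |∑_{y∈I} ω_y| ≤ δ|I| for every interval I ⊂ ∂_ex Λ(l) with |I| ≥ δl, where 0 < δ < 1. Let γ_1,…,γ_p be non-crossing (ε)-contours at σ, and let I be an interval in ∂_ex Λ(l) with ∪_j I(γ_j) ⊂ I and δl ≤ |I| ≤ ∑_j |γ̲_j| + c for some c ≥ 0. Then (1/2)Δ_{γ_1,…,γ_p} H^ω_{Λ(l)}(σ) ≥ ε₀ max{l, ∑_j |γ_j|} − c, for a constant ε₀ > 0 depending only on δ. -/

import Mathlib

open Finset

/-! ### Basic lattice notions for the 2-D Ising model on the square Λ(l) -/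

abbrev Site := ℤ × ℤ

/-- `l¹`-distance on `ℤ²`. -/
def d1 (x y : Site) : ℤ := |x.1 - y.1| + |x.2 - y.2|

/-- `l∞`-distance on `ℤ²`. -/
def dinf (x y : Site) : ℤ := max |x.1 - y.1| |x.2 - y.2|

/-- There is a path from `x` to `y` inside `S` with steps of `d`-distance 1. -/
def ChainIn (d : Site → Site → ℤ) (S : Set Site) (x y : Site) : Prop :=
  ∃ L : List Site, L.Chain' (fun a b => d a b = 1) ∧ L.head? = some x ∧
    L.getLast? = some y ∧ ∀ a ∈ L, a ∈ S

/-- `S` is connected with respect to steps of `d`-distance 1. -/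
def ConnIn (d : Site → Site → ℤ) (S : Set Site) : Prop :=
  ∀ x ∈ S, ∀ y ∈ S, ChainIn d S x y

def lamLo (l : ℕ) : ℤ := 1 - (((l + 1) / 2 : ℕ) : ℤ)
def lamHi (l : ℕ) : ℤ := ((l / 2 : ℕ) : ℤ)

/-- The lamBox the box. -/
noncomputable def lamBox (l : ℕ) : Finset Site := Finset.Icc (lamLo l, lamLo l) (lamHi l, lamHi l)

/-- The exterior boundary `∂_ex Λ(l)`. -/
def extBdry (l : ℕ) : Set Site := {y | y ∉ lamBox l ∧ ∃ x ∈ lamBox l, d1 x y = 1}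

/-- An interval of `∂_ex Λ(l)` : an `l∞`-connected subset of it. -/
def IsBdryInterval (l : ℕ) (I : Finset Site) : Prop :=
  (↑I : Set Site) ⊆ extBdry l ∧ ConnIn dinf ↑I

/-- The four nearest neighbours of a site. -/
def nbrs (x : Site) : Finset Site :=
  {(x.1 + 1, x.2), (x.1 - 1, x.2), (x.1, x.2 + 1), (x.1, x.2 - 1)}

/-- A dual bond, recorded by its two endpoints `v`, a dual vertex `v` standing for the
point `v + (1/2, 1/2)` of the dual lattice. -/
abbrev DBond := Sym2 Site

/-- The dual bond of the nearest-neighbour bond `{x, y}`. -/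
def dualBond (x y : Site) : DBond :=
  if x.2 = y.2 then s((min x.1 y.1, x.2 - 1), (min x.1 y.1, x.2))
  else s((x.1 - 1, min x.2 y.2), (x.1, min x.2 y.2))

/-- `∂Q(Θ)` : the set of dual bonds separating `Θ` from its complement. -/
def contourOf (Θ : Finset Site) : Finset DBond :=
  Θ.biUnion fun x => ((nbrs x).filter (· ∉ Θ)).image fun y => dualBond x y

/-- `Θ` and its complement are `l¹`-connected, so that `∂Q(Θ)` is a contour. -/
def IsContourRegion (Θ : Finset Site) : Prop :=
  ConnIn d1 ↑Θ ∧ ConnIn d1 ((↑Θ : Set Site)ᶜ)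

/-- `∂Q(Λ(l))`, as a set of dual bonds. -/
noncomputable def boxBdry (l : ℕ) : Finset DBond := contourOf (lamBox l)

/-- The dual vertex `v` lies on the side `F_l^j` of `Q(Λ(l))` (`j ∈ {1,-1,2,-2}` for
right, left, top, bottom). -/
def onSide (l : ℕ) (j : ℤ) (v : Site) : Prop :=
  (j = 1 ∧ v.1 = lamHi l ∧ lamLo l - 1 ≤ v.2 ∧ v.2 ≤ lamHi l) ∨
  (j = -1 ∧ v.1 = lamLo l - 1 ∧ lamLo l - 1 ≤ v.2 ∧ v.2 ≤ lamHi l) ∨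
  (j = 2 ∧ v.2 = lamHi l ∧ lamLo l - 1 ≤ v.1 ∧ v.1 ≤ lamHi l) ∨
  (j = -2 ∧ v.2 = lamLo l - 1 ∧ lamLo l - 1 ≤ v.1 ∧ v.1 ≤ lamHi l)

/-- The set of dual bonds `γ` meets the side `F_l^j`. -/
def touches (l : ℕ) (j : ℤ) (γ : Finset DBond) : Prop :=
  ∃ e ∈ γ, ∃ v : Site, v ∈ e ∧ onSide l j v

def HorizCrossing (l : ℕ) (γ : Finset DBond) : Prop := touches l 1 γ ∧ touches l (-1) γ
def VertCrossing (l : ℕ) (γ : Finset DBond) : Prop := touches l 2 γ ∧ touches l (-2) γ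

/-- `γ` is neither horizontally nor vertically crossing. -/
def NonCrossing (l : ℕ) (γ : Finset DBond) : Prop :=
  ¬ (HorizCrossing l γ ∨ VertCrossing l γ)

/-- Two dual bonds are adjacent if they share a dual vertex. -/
def DAdj (a b : DBond) : Prop := ∃ v : Site, v ∈ a ∧ v ∈ b

/-- A set of dual bonds is connected (via shared dual vertices). -/
def DConn (S : Finset DBond) : Prop :=
  ∀ e ∈ S, ∀ f ∈ S, ∃ L : List DBond, L.Chain' DAdj ∧ L.head? = some e ∧
    L.getLast? = some f ∧ ∀ a ∈ L, a ∈ S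

/-- Dual bonds separating `Θt` from `Λ(l) \ Θt` inside the lamBox. -/
noncomputable def interiorBdry (l : ℕ) (Θt : Finset Site) : Finset DBond :=
  Θt.biUnion fun x => ((nbrs x).filter fun y => y ∈ lamBox l ∧ y ∉ Θt).image fun y => dualBond x y

/-- The sites of `Λ(l)` along the side `F_l^j`. -/
def sideSites (l : ℕ) (j : ℤ) (x : Site) : Prop :=
  x ∈ lamBox l ∧ ((j = 1 ∧ x.1 = lamHi l) ∨ (j = -1 ∧ x.1 = lamLo l) ∨
    (j = 2 ∧ x.2 = lamHi l) ∨ (j = -2 ∧ x.2 = lamLo l))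

/-- The data of the distinguished connected component `γ̲ = γu` of `γ \ ∂Q(Λ(l))` and of the
region `Θ̃ = Θt` into which a non-crossing contour `γ = ∂Q(Θ)` divides the lamBox: `γu` is a
connected component of `γ \ ∂Q(Λ(l))` dividing `Λ(l)` into the `l¹`-connected pieces `Θt` and
`Λ(l) \ Θt`, with `Θ ⊆ Θt` and `F_l^i ∪ F_l^j ⊆ ∂Q(Λ(l) \ Θt)` for untouched sides `i, j`. -/
def UnderlineData (l : ℕ) (Θ : Finset Site) (γu : Finset DBond) (Θt : Finset Site) : Prop :=
  γu ⊆ contourOf Θ \ boxBdry l ∧ DConn γu ∧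
  (∀ e ∈ contourOf Θ \ boxBdry l, e ∉ γu → ∀ f ∈ γu, ¬ DAdj e f) ∧
  Θ ⊆ Θt ∧ Θt ⊆ lamBox l ∧ ConnIn d1 ↑Θt ∧ ConnIn d1 ↑(lamBox l \ Θt) ∧
  interiorBdry l Θt = γu ∧
  ∃ i j : ℤ, (i = 1 ∨ i = -1) ∧ (j = 2 ∨ j = -2) ∧
    ¬ touches l i (contourOf Θ) ∧ ¬ touches l j (contourOf Θ) ∧
    (∀ x, sideSites l i x → x ∉ Θt) ∧ (∀ x, sideSites l j x → x ∉ Θt)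

/-- `γ̄ = ∂Q(Λ(l)) ∩ ∂Q(Θ̃)`. -/
noncomputable def gammaBar (l : ℕ) (Θt : Finset Site) : Finset DBond := boxBdry l ∩ contourOf Θt

/-- `V_ex(γ)` : sites of the exterior boundary attached to dual bonds of `γ`. -/
noncomputable def Vex (l : ℕ) (γ : Finset DBond) : Finset Site :=
  (lamBox l).biUnion fun x => (nbrs x).filter fun y => y ∉ lamBox l ∧ dualBond x y ∈ γ

/-- `T_Θ` : flip the spins in `Θ`. -/
def flipC (Θ : Finset Site) (σ : Site → ℤ) : Site → ℤ :=
  fun x => if x ∈ Θ then -σ x else σ x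

/-- The Ising Hamiltonian `H^ω_{Λ(l)}(σ)` with boundary condition `ω`. -/
noncomputable def Ham (l : ℕ) (ω : Site → ℝ) (σ : Site → ℤ) : ℝ :=
  -(1/2) * ∑ x ∈ lamBox l, ∑ y ∈ (nbrs x).filter (· ∈ lamBox l), ((σ x * σ y : ℤ) : ℝ)
    - ∑ x ∈ lamBox l, ∑ y ∈ (nbrs x).filter (· ∉ lamBox l), (σ x : ℝ) * ω y

/-- `Δ_{γ₁,…,γ_p} H^ω_{Λ(l)}(σ) = H(σ) - H(T_{γ₁}∘⋯∘T_{γ_p} σ)`, the contours being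
recorded by their regions `Θ(γ_j)`. -/
noncomputable def dH (l : ℕ) (ω : Site → ℝ) (Θs : List (Finset Site)) (σ : Site → ℤ) : ℝ :=
  Ham l ω σ - Ham l ω (Θs.foldr flipC σ)

/-- `C` is an (ε)-cluster in `Λ(l)` at `σ` : a maximal `l¹`-connected component of
`{x ∈ Λ(l) : σ_x = ε}`. -/
def IsCluster (l : ℕ) (σ : Site → ℤ) (ε : ℤ) (C : Finset Site) : Prop :=
  C.Nonempty ∧ (∀ x ∈ C, x ∈ lamBox l ∧ σ x = ε) ∧ ConnIn d1 ↑C ∧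
  ∀ y ∈ lamBox l, σ y = ε → (∃ x ∈ C, d1 x y = 1) → y ∈ C

/-- The `l¹`-connected component of `x` within `S`. -/
def l1Comp (S : Set Site) (x : Site) : Set Site := {y | ChainIn d1 S x y}

/-- `C` together with the bounded components of its complement; `∂Q(fill C)` is the outer
boundary of `Q(C)`. -/
def fill (C : Finset Site) : Set Site :=
  ↑C ∪ {x | (l1Comp ((↑C : Set Site)ᶜ) x).Finite}

/-- `Θ` is the region `Θ(γ)` of an (ε)-contour `γ` in `Λ(l)` at `σ`. -/
def IsEContour (l : ℕ) (σ : Site → ℤ) (ε : ℤ) (Θ : Finset Site) : Prop :=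
  ∃ C : Finset Site, IsCluster l σ ε C ∧ (↑Θ : Set Site) = fill C

/-- A dual bond is horizontal. -/
def isHorizD (e : DBond) : Prop := ∃ v w : Site, e = s(v, w) ∧ v.2 = w.2

/-- A dual bond is vertical. -/
def isVertD (e : DBond) : Prop := ∃ v w : Site, e = s(v, w) ∧ v.1 = w.1

open Classical in
/-- The number of horizontal dual bonds in `γ`. -/
noncomputable def horizCount (γ : Finset DBond) : ℕ := (γ.filter isHorizD).card

open Classical in
/-- The number of vertical dual bonds in `γ`. -/
noncomputable def vertCount (γ : Finset DBond) : ℕ := (γ.filter isVertD).card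

/-! ### Glauber dynamics -/

/-- Configurations on a finite `Λ ⊂ ℤ²` (`true` = spin `+1`, `false` = spin `-1`). -/
abbrev Cfg (Λ : Finset Site) := ↥Λ → Bool

/-- The spin value of a Boolean. -/
def spinVal (b : Bool) : ℝ := if b then 1 else -1

/-- The Ising Hamiltonian on a general finite `Λ`. -/
noncomputable def HamG (Λ : Finset Site) (ω : Site → ℝ) (σ : Cfg Λ) : ℝ :=
  -(1/2) * ∑ x : ↥Λ, ∑ y : ↥Λ, (if d1 ↑x ↑y = 1 then spinVal (σ x) * spinVal (σ y) else 0)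
    - ∑ x : ↥Λ, ∑ y ∈ (nbrs ↑x).filter (· ∉ Λ), spinVal (σ x) * ω y

/-- The finite-volume Gibbs measure `μ^ω_Λ` at inverse temperature `β`. -/
noncomputable def gibbs (Λ : Finset Site) (ω : Site → ℝ) (β : ℝ) (σ : Cfg Λ) : ℝ :=
  Real.exp (-β * HamG Λ ω σ) / ∑ τ : Cfg Λ, Real.exp (-β * HamG Λ ω τ)

/-- The mean of `f` under the weights `μ`. -/
noncomputable def meanW (Λ : Finset Site) (μ f : Cfg Λ → ℝ) : ℝ := ∑ σ : Cfg Λ, μ σ * f σ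

/-- `σ^x` : flip the spin at `x`. -/
def flipAt (Λ : Finset Site) (σ : Cfg Λ) (x : ↥Λ) : Cfg Λ := Function.update σ x (!(σ x))

/-- The generator `A^ω_Λ` of the stochastic Ising model with flip rates `q`. -/
noncomputable def genA (Λ : Finset Site) (q : ↥Λ → Cfg Λ → ℝ) (f : Cfg Λ → ℝ) (σ : Cfg Λ) : ℝ :=
  ∑ x : ↥Λ, q x σ * (f (flipAt Λ σ x) - f σ)

/-- The variance `μ(|f - μf|²)`. -/
noncomputable def varW (Λ : Finset Site) (μ f : Cfg Λ → ℝ) : ℝ :=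
  meanW Λ μ (fun σ => |f σ - meanW Λ μ f| ^ 2)

/-- The spectral gap `gap(Λ, ω, β)` : the infimum of the Rayleigh quotients
`-μ(f A f) / μ(|f - μf|²)`. -/
noncomputable def specGap (Λ : Finset Site) (ω : Site → ℝ) (β : ℝ)
    (q : ↥Λ → Cfg Λ → ℝ) : ℝ :=
  sInf { r | ∃ f : Cfg Λ → ℝ, varW Λ (gibbs Λ ω β) f ≠ 0 ∧
    r = (- meanW Λ (gibbs Λ ω β) fun σ => f σ * genA Λ q f σ) / varW Λ (gibbs Λ ω β) f }

/-- The `±1`-spin function of a configuration on `Λ(l)` (`0` outside the lamBox). -/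
noncomputable def toSpin (l : ℕ) (σ : Cfg (lamBox l)) : Site → ℤ :=
  fun x => if h : x ∈ lamBox l then (if σ ⟨x, h⟩ then 1 else -1) else 0

/-- The magnetization at the origin, `μ^ω_{Λ(l)}(σ₀)`. -/
noncomputable def magZero (l : ℕ) (ω : Site → ℝ) (β : ℝ) : ℝ :=
  ∑ σ : Cfg (lamBox l), gibbs (lamBox l) ω β σ * ((toSpin l σ (0, 0) : ℤ) : ℝ)

/-- The favoured sign `ε_{l,ω}`. -/
noncomputable def epsSign (l : ℕ) (ω : Site → ℝ) (β : ℝ) : ℤ :=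
  if 0 ≤ magZero l ω β then 1 else -1

/-- The trap event `Γ_l` : some (ε)-contour `γ` at `σ` meets `∂Q(Λ(l))` and has
`|γ| ≥ 2δ₁ l`. -/
def GammaEvent (l : ℕ) (δ₁ : ℝ) (ε : ℤ) : Set (Cfg (lamBox l)) :=
  {σ | ∃ Θ : Finset Site, IsEContour l (toSpin l σ) ε Θ ∧
    (contourOf Θ ∩ boxBdry l).Nonempty ∧ 2 * δ₁ * l ≤ ((contourOf Θ).card : ℝ)}

open Classical in
/-- The Gibbs probability of an event `S ⊂ Ω_{Λ(l)}`. -/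
noncomputable def probOf (l : ℕ) (ω : Site → ℝ) (β : ℝ) (S : Set (Cfg (lamBox l))) : ℝ :=
  ∑ σ ∈ Finset.univ.filter (· ∈ S), gibbs (lamBox l) ω β σ

/-- Union of the contours of a list of regions. -/
def unionB (L : List (Finset Site)) : Finset DBond :=
  L.foldr (fun Θ s => contourOf Θ ∪ s) ∅

/-- Union of a list of regions. -/
def unionR (L : List (Finset Site)) : Finset Site :=
  L.foldr (· ∪ ·) ∅

-- basic neighbour lemmas
lemma mem_nbrs_iff {x y : Site} : y ∈ nbrs x ↔ d1 x y = 1 := by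
  simp only [nbrs, Finset.mem_insert, Finset.mem_singleton, d1, Prod.ext_iff]
  rcases x with ⟨a,b⟩; rcases y with ⟨u,v⟩
  simp only [abs_eq_max_neg]
  omega

lemma nbrs_symm {x y : Site} : y ∈ nbrs x ↔ x ∈ nbrs y := by
  rw [mem_nbrs_iff, mem_nbrs_iff, d1, d1]
  simp only [abs_eq_max_neg]
  omega

lemma foldr_flipC_eq (L : List (Finset Site)) (σ : Site → ℤ) (x : Site) :
    L.foldr flipC σ x = (if Odd (L.countP fun Θ => x ∈ Θ) then -σ x else σ x) := by
  induction L with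
  | nil => simp
  | cons Θ t ih =>
    simp only [List.foldr_cons, flipC, ih, List.countP_cons]
    by_cases hx : x ∈ Θ <;> by_cases ho : Odd (t.countP fun Θ => x ∈ Θ) <;>
      simp [hx, ho, Nat.odd_add] <;> omega

lemma chainIn_self {d : Site → Site → ℤ} {S : Set Site} {x : Site} (hx : x ∈ S) :
    ChainIn d S x x :=
  ⟨[x], List.isChain_singleton _, by simp, by simp, by simpa using hx⟩

lemma chainIn_cons {d : Site → Site → ℤ} {S : Set Site} {x y z : Site}
    (hx : x ∈ S) (hxy : d x y = 1) (h : ChainIn d S y z) : ChainIn d S x z := by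
  obtain ⟨L, hc, hh, hl, hm⟩ := h
  match L, hh with
  | y' :: t, hh =>
    simp only [List.head?_cons, Option.some.injEq] at hh
    obtain rfl := hh
    exact ⟨x :: y' :: t, by
      refine List.isChain_cons_cons.2 ?_
      exact ⟨hxy, hc⟩, by simp, by
      rw [List.getLast?_cons_cons]; exact hl, by
      intro a ha
      rcases List.mem_cons.1 ha with h | h
      · exact h ▸ hx
      · exact hm a h⟩

lemma comp_mono_adj {S : Set Site} {x y : Site} (hx : x ∈ S) (hxy : d1 x y = 1) :
    l1Comp S y ⊆ l1Comp S x := fun z hz => chainIn_cons hx hxy hz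

/-- An infinite ray in the complement of the box. -/
lemma ray_infinite {l : ℕ} {C : Finset Site} (hCB : ∀ a ∈ C, a ∈ lamBox l)
    {x : Site} (hx : x ∉ lamBox l) : (l1Comp ((↑C : Set Site)ᶜ) x).Infinite := by
  have hbox : ∀ z : Site, z ∈ lamBox l ↔
      lamLo l ≤ z.1 ∧ z.1 ≤ lamHi l ∧ lamLo l ≤ z.2 ∧ z.2 ≤ lamHi l := by
    intro z
    simp [lamBox, Finset.mem_Icc, Prod.le_def]
    tauto
  -- choose a direction
  obtain ⟨v, hv, hout⟩ : ∃ v : Site, (|v.1| + |v.2| = 1) ∧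
      ∀ n : ℕ, (x.1 + n * v.1, x.2 + n * v.2) ∉ lamBox l := by
    rw [hbox] at hx
    push_neg at hx
    rcases lt_or_ge x.1 (lamLo l) with h | h1
    · exact ⟨(-1, 0), by norm_num, fun n => by rw [hbox]; push_neg; intro h'; omega⟩
    rcases lt_or_ge (lamHi l) x.1 with h | h2
    · exact ⟨(1, 0), by norm_num, fun n => by rw [hbox]; push_neg; intro h'; omega⟩
    rcases lt_or_ge x.2 (lamLo l) with h | h3
    · exact ⟨(0, -1), by norm_num, fun n => by rw [hbox]; push_neg; intro h'; omega⟩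
    rcases lt_or_ge (lamHi l) x.2 with h | h4
    · exact ⟨(0, 1), by norm_num, fun n => by rw [hbox]; push_neg; intro h'; omega⟩
    exact absurd (hx h1 h2 h3) (by omega)
  set f : ℕ → Site := fun n => (x.1 + n * v.1, x.2 + n * v.2) with hf
  have hfS : ∀ n, f n ∈ ((↑C : Set Site)ᶜ) := by
    intro n
    simp only [Set.mem_compl_iff, Finset.coe_sort_coe, Finset.mem_coe]
    intro hmem
    exact hout n (hCB _ hmem)
  have hvcase : v = (1,0) ∨ v = (-1,0) ∨ v = (0,1) ∨ v = (0,-1) := by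
    rcases v with ⟨a,b⟩
    simp only [abs_eq_max_neg, Prod.mk.injEq] at hv ⊢
    omega
  have hstep : ∀ n : ℕ, d1 (f n) (f (n+1)) = 1 := by
    intro n
    rcases hvcase with rfl | rfl | rfl | rfl <;>
      simp [hf, d1, abs_eq_max_neg] <;> omega
  have hchain : ∀ n, ChainIn d1 ((↑C : Set Site)ᶜ) x (f n) := by
    intro n
    refine ⟨(List.range (n+1)).map f, ?_, ?_, ?_, ?_⟩
    · show List.IsChain _ _; rw [List.isChain_map]
      rw [List.isChain_range_succ]
      intro m hm
      exact hstep m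
    · rw [List.head?_map, List.range_succ_eq_map]
      simp [hf]
    · rw [List.getLast?_map, List.range_succ]
      simp
    · intro a ha
      simp only [List.mem_map, List.mem_range] at ha
      obtain ⟨m, _, rfl⟩ := ha
      exact hfS m
  have hvne : v ≠ 0 := by
    intro h
    rw [h] at hv
    simp at hv
  have hinj : Function.Injective f := by
    intro m n h
    simp only [hf, Prod.mk.injEq] at h
    have h1 := h.1
    have h2 := h.2
    rcases hv with hv
    have : v.1 ≠ 0 ∨ v.2 ≠ 0 := by
      by_contra hc
      push_neg at hc
      simp [abs_eq_max_neg, hc.1, hc.2] at hv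
    rcases this with h' | h'
    · have : (m : ℤ) = n := by
        have := mul_right_cancel₀ h' (by omega : (m : ℤ) * v.1 = n * v.1)
        exact_mod_cast this
      exact_mod_cast this
    · have : (m : ℤ) = n := by
        have := mul_right_cancel₀ h' (by omega : (m : ℤ) * v.2 = n * v.2)
        exact_mod_cast this
      exact_mod_cast this
  exact Set.infinite_of_injective_forall_mem hinj fun n => hchain n

lemma mem_fill_iff {C : Finset Site} {x : Site} :
    x ∈ fill C ↔ x ∈ C ∨ (l1Comp ((↑C : Set Site)ᶜ) x).Finite := by
  simp [fill]

section ClusterFacts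

variable {l : ℕ} {σ : Site → ℤ} {ε : ℤ} {C Θ : Finset Site}

lemma cluster_subset_box (hcl : IsCluster l σ ε C) : ∀ a ∈ C, a ∈ lamBox l :=
  fun a ha => (hcl.2.1 a ha).1

lemma fill_subset_box (hcl : IsCluster l σ ε C) (hfill : (↑Θ : Set Site) = fill C)
    {x : Site} (hx : x ∈ Θ) : x ∈ lamBox l := by
  by_contra hxb
  have hxf : x ∈ fill C := hfill ▸ (Finset.mem_coe.2 hx)
  rcases mem_fill_iff.1 hxf with h | h
  · exact hxb (cluster_subset_box hcl _ h)
  · exact (ray_infinite (cluster_subset_box hcl) hxb) h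

lemma cluster_subset_fill (hcl : IsCluster l σ ε C) (hfill : (↑Θ : Set Site) = fill C) :
    C ⊆ Θ := by
  intro a ha
  have : a ∈ fill C := Or.inl (Finset.mem_coe.2 ha)
  rw [← hfill] at this
  exact Finset.mem_coe.1 this

/-- A site of `Θ` adjacent to the outside of `Θ` belongs to the cluster `C`. -/
lemma bdry_mem_cluster (hcl : IsCluster l σ ε C) (hfill : (↑Θ : Set Site) = fill C)
    {x y : Site} (hx : x ∈ Θ) (hy : y ∉ Θ) (hxy : d1 x y = 1) : x ∈ C := by
  by_contra hxC
  have hxf : x ∈ fill C := hfill ▸ (Finset.mem_coe.2 hx)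
  have hxfin : (l1Comp ((↑C : Set Site)ᶜ) x).Finite := (mem_fill_iff.1 hxf).resolve_left hxC
  have hyC : y ∉ C := fun h => hy (cluster_subset_fill hcl hfill h)
  have hyf : y ∉ fill C := fun h => hy (Finset.mem_coe.1 (hfill ▸ h))
  have hyinf : ¬ (l1Comp ((↑C : Set Site)ᶜ) y).Finite := by
    intro h
    exact hyf (mem_fill_iff.2 (Or.inr h))
  exact hyinf (hxfin.subset (comp_mono_adj (by simpa using hxC) hxy))

/-- Two clusters sharing a site coincide. -/
lemma cluster_eq (hcl : IsCluster l σ ε C) {C' : Finset Site} (hcl' : IsCluster l σ ε C')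
    {x : Site} (hx : x ∈ C) (hx' : x ∈ C') : C = C' := by
  -- first: any cluster containing a point of another is a superset
  have key : ∀ C₁ C₂ : Finset Site, IsCluster l σ ε C₁ → IsCluster l σ ε C₂ →
      ∀ z, z ∈ C₁ → z ∈ C₂ → C₁ ⊆ C₂ := by
    intro C₁ C₂ h1 h2 z hz1 hz2 a ha
    obtain ⟨L, hc, hh, hl, hm⟩ := h1.2.2.1 z (by simpa using hz1) a (by simpa using ha)
    -- walk along the chain
    have main : ∀ (t : List Site), t.Chain' (fun a b => d1 a b = 1) →
        (∀ b ∈ t, b ∈ C₁) → ∀ w, t.head? = some w → w ∈ C₂ → ∀ b ∈ t, b ∈ C₂ := by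
      intro t
      induction t with
      | nil => intro _ _ w hw; simp at hw
      | cons u t ih =>
        intro hc hm w hw hwC b hb
        simp only [List.head?_cons, Option.some.injEq] at hw
        obtain rfl := hw
        rcases List.mem_cons.1 hb with rfl | hb
        · exact hwC
        · match t, hb with
          | u' :: t', hb =>
            have hstep : d1 u u' = 1 := (List.isChain_cons_cons.1 hc).1
            have hu'C1 : u' ∈ C₁ := hm u' (by simp)
            have hu' : u' ∈ C₂ := by
              apply h2.2.2.2 u' ((h1.2.1 u' hu'C1).1) ((h1.2.1 u' hu'C1).2)
              exact ⟨u, hwC, hstep⟩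
            exact ih (List.isChain_cons_cons.1 hc).2 (fun b hb => hm b (by simp [hb]))
              u' rfl hu' b hb
    have := main L hc hm z hh hz2 a (by
      have : a ∈ L := by
        rcases L.eq_nil_or_concat with rfl | ⟨t, e, rfl⟩
        · simp at hh
        · simp at hl
          subst hl
          simp
      exact this)
    exact this
  exact le_antisymm (key C C' hcl hcl' x hx hx') (key C' C hcl' hcl x hx' hx)

end ClusterFacts

theorem countP_ofFn_card {n : ℕ} {α : Type} (f : Fin n → α) (q : α → Bool) :
    (List.ofFn f).countP q = (Finset.univ.filter fun i => q (f i)).card := by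
  induction n with
  | zero => simp
  | succ m ih =>
    rw [List.ofFn_succ, List.countP_cons, ih (fun i => f i.succ),
      Finset.card_filter, Finset.card_filter, Fin.sum_univ_succ]
    by_cases h : q (f 0) <;> simp [h] <;> omega

lemma mem_lamBox_iff {l : ℕ} {z : Site} : z ∈ lamBox l ↔
    lamLo l ≤ z.1 ∧ z.1 ≤ lamHi l ∧ lamLo l ≤ z.2 ∧ z.2 ≤ lamHi l := by
  simp [lamBox, Finset.mem_Icc, Prod.le_def]
  tauto

/-- An exterior site has at most one neighbour in the box. -/
lemma uniq_box_nbr {l : ℕ} {y x1 x2 : Site} (hy : y ∉ lamBox l)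
    (h1 : x1 ∈ lamBox l) (h2 : x2 ∈ lamBox l)
    (d1' : d1 x1 y = 1) (d2' : d1 x2 y = 1) : x1 = x2 := by
  rw [mem_lamBox_iff] at h1 h2 hy
  push_neg at hy
  simp only [d1, abs_eq_max_neg] at d1' d2'
  rw [Prod.ext_iff]
  omega

section Family

variable {l : ℕ} {σ : Site → ℤ} {ε : ℤ} {p : ℕ} {Θs Cs : Fin p → Finset Site}

/-- A1 : a site of `Θ_k` adjacent to the complement of `Θ_k` lies in the cluster. -/
lemma famA1 (hC : ∀ j, IsCluster l σ ε (Cs j) ∧ (↑(Θs j) : Set Site) = fill (Cs j))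
    {k : Fin p} {x y : Site} (hx : x ∈ Θs k) (hy : y ∉ Θs k) (hxy : d1 x y = 1) :
    x ∈ Cs k :=
  bdry_mem_cluster (hC k).1 (hC k).2 hx hy hxy

lemma famSpin (hC : ∀ j, IsCluster l σ ε (Cs j) ∧ (↑(Θs j) : Set Site) = fill (Cs j))
    {k : Fin p} {x : Site} (hx : x ∈ Cs k) : σ x = ε := ((hC k).1.2.1 x hx).2

/-- A2 : an in-box site adjacent to `Θ_k` from outside carries spin `-ε`. -/
lemma famA2 (hC : ∀ j, IsCluster l σ ε (Cs j) ∧ (↑(Θs j) : Set Site) = fill (Cs j))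
    (hσ : ∀ x ∈ lamBox l, σ x = 1 ∨ σ x = -1) (hε : ε = 1 ∨ ε = -1)
    {k : Fin p} {x y : Site} (hx : x ∈ Θs k) (hy : y ∉ Θs k) (hyB : y ∈ lamBox l)
    (hxy : d1 x y = 1) : σ y = -ε := by
  have hxC := famA1 hC hx hy hxy
  have hne : σ y ≠ ε := by
    intro h
    exact hy (cluster_subset_fill (hC k).1 (hC k).2
      ((hC k).1.2.2.2 y hyB h ⟨x, hxC, hxy⟩))
  rcases hσ y hyB with h | h <;> rcases hε with rfl | rfl <;> omega

lemma theta_eq_of_cluster_eq (hC : ∀ j, IsCluster l σ ε (Cs j) ∧ (↑(Θs j) : Set Site) = fill (Cs j))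
    (hinj : Function.Injective Θs) {j k : Fin p} {x : Site}
    (hj : x ∈ Cs j) (hk : x ∈ Cs k) : j = k := by
  have : Cs j = Cs k := cluster_eq (hC j).1 (hC k).1 hj hk
  apply hinj
  apply Finset.coe_injective
  rw [(hC j).2, (hC k).2, this]

/-- A4 : a site of `Θ_k` adjacent to the exterior of the box lies in no other region. -/
lemma famA4 (hC : ∀ j, IsCluster l σ ε (Cs j) ∧ (↑(Θs j) : Set Site) = fill (Cs j))
    (hinj : Function.Injective Θs)
    {k : Fin p} {x y : Site} (hx : x ∈ Θs k) (hyB : y ∉ lamBox l) (hxy : d1 x y = 1)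
    {j : Fin p} (hjk : j ≠ k) : x ∉ Θs j := by
  intro hxj
  have hyk : y ∉ Θs k := fun h => hyB (fill_subset_box (hC k).1 (hC k).2 h)
  have hxC : x ∈ Cs k := famA1 hC hx hyk hxy
  by_cases hxCj : x ∈ Cs j
  · exact hjk (theta_eq_of_cluster_eq hC hinj hxCj hxC)
  · -- x in a hole of C_j, but adjacent to infinite exterior
    have hxf : x ∈ fill (Cs j) := (hC j).2 ▸ (Finset.mem_coe.2 hxj)
    have hfin : (l1Comp ((↑(Cs j) : Set Site))ᶜ x).Finite :=
      (mem_fill_iff.1 hxf).resolve_left hxCj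
    have hyinf : (l1Comp ((↑(Cs j) : Set Site))ᶜ y).Infinite :=
      ray_infinite (cluster_subset_box (hC j).1) hyB
    exact hyinf (hfin.subset (comp_mono_adj (by
      simp only [Set.mem_compl_iff, Finset.mem_coe]
      exact hxCj) hxy))

/-- A3 : any other region contains both or neither endpoint of a crossing pair of `Θ_k`. -/
lemma famA3 (hC : ∀ j, IsCluster l σ ε (Cs j) ∧ (↑(Θs j) : Set Site) = fill (Cs j))
    (hinj : Function.Injective Θs)
    (hσ : ∀ x ∈ lamBox l, σ x = 1 ∨ σ x = -1) (hε : ε = 1 ∨ ε = -1)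
    {k : Fin p} {x y : Site} (hx : x ∈ Θs k) (hy : y ∉ Θs k) (hxy : d1 x y = 1)
    {j : Fin p} (hjk : j ≠ k) : x ∈ Θs j ↔ y ∈ Θs j := by
  have hxC : x ∈ Cs k := famA1 hC hx hy hxy
  have hεne : ε ≠ -ε := by rcases hε with rfl | rfl <;> omega
  have hyCj : y ∉ Cs j := by
    intro hyCj
    by_cases hyB : y ∈ lamBox l
    · exact hεne (by rw [← famA2 hC hσ hε hx hy hyB hxy, famSpin hC hyCj])
    · exact hyB (cluster_subset_box (hC j).1 _ hyCj)
  constructor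
  · intro hxj
    by_cases hyB : y ∈ lamBox l
    · by_cases hxCj : x ∈ Cs j
      · exact absurd (theta_eq_of_cluster_eq hC hinj hxCj hxC) hjk
      · have hxf : x ∈ fill (Cs j) := (hC j).2 ▸ (Finset.mem_coe.2 hxj)
        have hfin : (l1Comp ((↑(Cs j) : Set Site))ᶜ x).Finite :=
          (mem_fill_iff.1 hxf).resolve_left hxCj
        have : (l1Comp ((↑(Cs j) : Set Site))ᶜ y).Finite :=
          hfin.subset (comp_mono_adj (by
            simp only [Set.mem_compl_iff, Finset.mem_coe]; exact hxCj) hxy)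
        have : y ∈ fill (Cs j) := mem_fill_iff.2 (Or.inr this)
        rw [← (hC j).2] at this
        exact Finset.mem_coe.1 this
    · exact absurd hxj (famA4 hC hinj hx hyB hxy hjk)
  · intro hyj
    by_contra hxj
    -- y ∈ Θ_j, x ∉ Θ_j adjacent : y is a boundary site of Θ_j, so y ∈ C_j
    have hyxd : d1 y x = 1 := by
      rw [← mem_nbrs_iff] at hxy ⊢
      exact nbrs_symm.1 hxy
    exact hyCj (bdry_mem_cluster (hC j).1 (hC j).2 hyj hxj hyxd)

end Family

/-- Crossing pairs of a region inside the box. -/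
noncomputable def cpairs (l : ℕ) (Θ : Finset Site) : Finset (Site × Site) :=
  (Θ ×ˢ (lamBox l \ Θ)).filter fun q => q.2 ∈ nbrs q.1

/-- Exterior sites attached to a region. -/
noncomputable def extW (l : ℕ) (Θ : Finset Site) : Finset Site :=
  Θ.biUnion fun x => (nbrs x).filter (· ∉ lamBox l)

lemma sum_pair_form (B : Finset Site) (F : Site → Site → ℝ) :
    ∑ x ∈ B, ∑ y ∈ (nbrs x).filter (· ∈ B), F x y
      = ∑ q ∈ (B ×ˢ B).filter (fun q => q.2 ∈ nbrs q.1), F q.1 q.2 := by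
  trans ∑ x ∈ B, ∑ y ∈ B, if y ∈ nbrs x then F x y else 0
  · refine Finset.sum_congr rfl fun x hx => ?_
    rw [← Finset.sum_filter]
    congr 1
    ext y
    simp [and_comm]
  · rw [Finset.sum_filter]
    exact (Finset.sum_product' B B (fun x y => if y ∈ nbrs x then F x y else 0)).symm

section HamCalc

variable {l : ℕ} {σ : Site → ℤ} {ε : ℤ} {p : ℕ} {Θs Cs : Fin p → Finset Site}

lemma dH_formula (hC : ∀ j, IsCluster l σ ε (Cs j) ∧ (↑(Θs j) : Set Site) = fill (Cs j))
    (hinj : Function.Injective Θs)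
    (hσ : ∀ x ∈ lamBox l, σ x = 1 ∨ σ x = -1) (hε : ε = 1 ∨ ε = -1) (ω : Site → ℝ) :
    dH l ω (List.ofFn Θs) σ
      = (∑ k, 2 * ((cpairs l (Θs k)).card : ℝ))
        - 2 * (ε : ℝ) * ∑ k, ∑ y ∈ extW l (Θs k), ω y := by
  classical
  set P : Site → Prop := fun x => Odd ((Finset.univ.filter fun j => x ∈ Θs j).card) with hP
  have hσ'' : ∀ x, (List.ofFn Θs).foldr flipC σ x = if P x then -σ x else σ x := by
    intro x
    rw [foldr_flipC_eq, countP_ofFn_card]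
    simp [hP]
  have hΘB : ∀ k, ∀ x ∈ Θs k, x ∈ lamBox l := fun k x hx =>
    fill_subset_box (hC k).1 (hC k).2 hx
  -- filter comparison along a crossing pair
  have hfilt : ∀ {k : Fin p} {x y : Site}, x ∈ Θs k → y ∉ Θs k → d1 x y = 1 →
      (Finset.univ.filter fun j => x ∈ Θs j)
        = insert k (Finset.univ.filter fun j => y ∈ Θs j) := by
    intro k x y hx hy hxy
    ext j
    simp only [Finset.mem_filter, Finset.mem_univ, true_and, Finset.mem_insert]
    by_cases hjk : j = k
    · subst hjk
      exact ⟨fun _ => Or.inl rfl, fun _ => hx⟩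
    · rw [famA3 hC hinj hσ hε hx hy hxy hjk]
      simp [hjk]
  have hPdiff : ∀ {k : Fin p} {x y : Site}, x ∈ Θs k → y ∉ Θs k → d1 x y = 1 →
      (P x ↔ ¬ P y) := by
    intro k x y hx hy hxy
    have hk : k ∉ (Finset.univ.filter fun j => y ∈ Θs j) := by simp [hy]
    show Odd ((Finset.univ.filter fun j => x ∈ Θs j).card)
      ↔ ¬ Odd ((Finset.univ.filter fun j => y ∈ Θs j).card)
    rw [hfilt hx hy hxy, Finset.card_insert_of_notMem hk, Nat.odd_add_one]
  have hPext : ∀ {k : Fin p} {x y : Site}, x ∈ Θs k → y ∉ lamBox l → d1 x y = 1 →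
      (Finset.univ.filter fun j => x ∈ Θs j) = {k} := by
    intro k x y hx hy hxy
    ext j
    simp only [Finset.mem_filter, Finset.mem_univ, true_and, Finset.mem_singleton]
    constructor
    · intro hj
      by_contra hjk
      exact famA4 hC hinj hx hy hxy hjk hj
    · rintro rfl; exact hx
  -- spin values on crossing pairs
  have hspin : ∀ {k : Fin p} {x y : Site}, x ∈ Θs k → y ∉ Θs k → y ∈ lamBox l →
      d1 x y = 1 → σ x = ε ∧ σ y = -ε := fun hx hy hyB hxy =>
    ⟨famSpin hC (famA1 hC hx hy hxy), famA2 hC hσ hε hx hy hyB hxy⟩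
  set τ : Site → ℤ := (List.ofFn Θs).foldr flipC σ with hτ
  set T : Site → ℝ := fun x => ∑ y ∈ (nbrs x).filter (· ∉ lamBox l), ω y with hT
  -- the boundary-field part
  have claimB : (∑ x ∈ lamBox l, ∑ y ∈ (nbrs x).filter (· ∉ lamBox l), (τ x : ℝ) * ω y)
      - (∑ x ∈ lamBox l, ∑ y ∈ (nbrs x).filter (· ∉ lamBox l), (σ x : ℝ) * ω y)
      = -(2*(ε:ℝ)) * ∑ k, ∑ y ∈ extW l (Θs k), ω y := by
    have step1 : (∑ x ∈ lamBox l, ∑ y ∈ (nbrs x).filter (· ∉ lamBox l), (τ x : ℝ) * ω y)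
        - (∑ x ∈ lamBox l, ∑ y ∈ (nbrs x).filter (· ∉ lamBox l), (σ x : ℝ) * ω y)
        = ∑ x ∈ lamBox l, (if P x then (-2*(σ x:ℝ)) * T x else 0) := by
      rw [← Finset.sum_sub_distrib]
      refine Finset.sum_congr rfl fun x hx => ?_
      rw [← Finset.sum_sub_distrib]
      have : ∀ y, (τ x : ℝ) * ω y - (σ x : ℝ) * ω y
          = (if P x then (-2*(σ x:ℝ)) else 0) * ω y := by
        intro y
        rw [hσ'' x]
        by_cases h : P x <;> simp [h] <;> push_cast <;> ring
      rw [Finset.sum_congr rfl fun y _ => this y]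
      by_cases h : P x
      · simp only [h, if_true, hT, ← Finset.mul_sum]
      · simp [h]
    rw [step1, ← Finset.sum_filter]
    -- the sites with odd flip count and an exterior neighbour
    set Dk : Fin p → Finset Site :=
      fun k => (Θs k).filter (fun x => ((nbrs x).filter (· ∉ lamBox l)).Nonempty) with hDk
    have hTzero : ∀ x, ((nbrs x).filter (· ∉ lamBox l)) = ∅ → T x = 0 := by
      intro x h
      rw [hT]
      simp [h]
    have hDsub : Finset.univ.biUnion Dk ⊆ (lamBox l).filter P := by
      intro x hx
      rw [Finset.mem_biUnion] at hx
      obtain ⟨k, -, hx⟩ := hx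
      rw [hDk, Finset.mem_filter] at hx
      obtain ⟨hxk, y, hy⟩ := hx
      rw [Finset.mem_filter] at hy
      refine Finset.mem_filter.2 ⟨hΘB k x hxk, ?_⟩
      show Odd _
      rw [hPext hxk hy.2 (mem_nbrs_iff.1 hy.1)]
      simp
    have hzero : ∀ x ∈ (lamBox l).filter P, x ∉ Finset.univ.biUnion Dk →
        (-2*(σ x:ℝ)) * T x = 0 := by
      intro x hx hx'
      have hni : ((nbrs x).filter (· ∉ lamBox l)) = ∅ := by
        by_contra hne
        have hPx : P x := (Finset.mem_filter.1 hx).2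
        have : (Finset.univ.filter fun j => x ∈ Θs j).Nonempty := by
          rw [Finset.nonempty_iff_ne_empty]
          intro h
          rw [hP] at hPx
          simp only [h] at hPx
          simp at hPx
        obtain ⟨k, hk⟩ := this
        have hxk : x ∈ Θs k := (Finset.mem_filter.1 hk).2
        exact hx' (Finset.mem_biUnion.2 ⟨k, Finset.mem_univ k,
          Finset.mem_filter.2 ⟨hxk, Finset.nonempty_iff_ne_empty.2 hne⟩⟩)
      rw [hTzero x hni, mul_zero]
    rw [← Finset.sum_subset hDsub hzero]
    have hDdisj : ((Finset.univ : Finset (Fin p)) : Set (Fin p)).PairwiseDisjoint Dk := by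
      intro j _ k _ hjk
      refine Finset.disjoint_left.2 fun x hxj hxk => ?_
      rw [hDk, Finset.mem_filter] at hxj hxk
      obtain ⟨hxj, y, hy⟩ := hxj
      rw [Finset.mem_filter] at hy
      exact famA4 hC hinj hxk.1 hy.2 (mem_nbrs_iff.1 hy.1) hjk hxj
    rw [Finset.sum_biUnion hDdisj]
    have main : ∀ k : Fin p, ∑ x ∈ Dk k, -2 * (σ x:ℝ) * T x
        = -2*(ε:ℝ) * ∑ y ∈ extW l (Θs k), ω y := by
      intro k
      have hspinD : ∀ x ∈ Dk k, σ x = ε := by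
        intro x hx
        rw [hDk, Finset.mem_filter] at hx
        obtain ⟨hxk, y, hy⟩ := hx
        rw [Finset.mem_filter] at hy
        have hyΘ : y ∉ Θs k := fun h => hy.2 (hΘB k y h)
        exact famSpin hC (famA1 hC hxk hyΘ (mem_nbrs_iff.1 hy.1))
      rw [Finset.sum_congr rfl fun x hx => by rw [hspinD x hx]]
      have hext : ∀ x ∈ Θs k, x ∉ Dk k → (-2*((ε:ℤ):ℝ)) * T x = 0 := by
        intro x hx hx'
        have : ¬ ((nbrs x).filter (· ∉ lamBox l)).Nonempty := by
          intro h
          exact hx' (Finset.mem_filter.2 ⟨hx, h⟩)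
        rw [hTzero x (Finset.not_nonempty_iff_eq_empty.1 this), mul_zero]
      rw [Finset.sum_subset (Finset.filter_subset _ _) hext, ← Finset.mul_sum]
      have : ∑ x ∈ Θs k, T x = ∑ y ∈ extW l (Θs k), ω y := by
        rw [extW, Finset.sum_biUnion]
        intro x1 hx1 x2 hx2 h12
        refine Finset.disjoint_left.2 fun y hy1 hy2 => ?_
        rw [Finset.mem_filter] at hy1 hy2
        rw [Finset.mem_coe] at hx1 hx2
        exact h12 (uniq_box_nbr hy1.2 (hΘB k x1 hx1) (hΘB k x2 hx2)
          (mem_nbrs_iff.1 hy1.1) (mem_nbrs_iff.1 hy2.1))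
      rw [this]
    rw [Finset.sum_congr rfl fun k _ => main k, ← Finset.mul_sum]
    ring
  -- the interior part
  have claimA : (∑ x ∈ lamBox l, ∑ y ∈ (nbrs x).filter (· ∈ lamBox l), ((τ x * τ y : ℤ) : ℝ))
      - (∑ x ∈ lamBox l, ∑ y ∈ (nbrs x).filter (· ∈ lamBox l), ((σ x * σ y : ℤ) : ℝ))
      = 2 * ∑ k, 2 * ((cpairs l (Θs k)).card : ℝ) := by
    have step1 : (∑ x ∈ lamBox l, ∑ y ∈ (nbrs x).filter (· ∈ lamBox l), ((τ x * τ y : ℤ) : ℝ))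
        - (∑ x ∈ lamBox l, ∑ y ∈ (nbrs x).filter (· ∈ lamBox l), ((σ x * σ y : ℤ) : ℝ))
        = ∑ x ∈ lamBox l, ∑ y ∈ (nbrs x).filter (· ∈ lamBox l),
            (if ¬ (P x ↔ P y) then (-2) * ((σ x * σ y : ℤ) : ℝ) else 0) := by
      rw [← Finset.sum_sub_distrib]
      refine Finset.sum_congr rfl fun x _ => ?_
      rw [← Finset.sum_sub_distrib]
      refine Finset.sum_congr rfl fun y _ => ?_
      rw [hσ'' x, hσ'' y]
      by_cases h1 : P x <;> by_cases h2 : P y <;> simp [h1, h2] <;> push_cast <;> ring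
    rw [step1, sum_pair_form (lamBox l)
      (fun x y => if ¬ (P x ↔ P y) then (-2) * ((σ x * σ y : ℤ) : ℝ) else 0),
      ← Finset.sum_filter]
    -- identify the set of flipping pairs
    have hEeq : ((lamBox l ×ˢ lamBox l).filter (fun q => q.2 ∈ nbrs q.1)).filter
          (fun q => ¬ (P q.1 ↔ P q.2))
        = Finset.univ.biUnion
            (fun k => cpairs l (Θs k) ∪ (cpairs l (Θs k)).image Prod.swap) := by
      ext q
      simp only [Finset.mem_filter, Finset.mem_product, Finset.mem_biUnion, Finset.mem_univ,
        true_and, Finset.mem_union, Finset.mem_image]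
      constructor
      · rintro ⟨⟨⟨hq1, hq2⟩, hadj⟩, hPd⟩
        have : ¬ ∀ j, (q.1 ∈ Θs j ↔ q.2 ∈ Θs j) := by
          intro hall
          have : (Finset.univ.filter fun j => q.1 ∈ Θs j)
              = (Finset.univ.filter fun j => q.2 ∈ Θs j) :=
            Finset.filter_congr fun j _ => hall j
          exact hPd (by show Odd _ ↔ Odd _; rw [this])
        push_neg at this
        obtain ⟨j, hj⟩ := this
        by_cases h1 : q.1 ∈ Θs j
        · refine ⟨j, Or.inl ?_⟩
          rw [cpairs, Finset.mem_filter, Finset.mem_product, Finset.mem_sdiff]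
          exact ⟨⟨h1, hq2, by tauto⟩, hadj⟩
        · refine ⟨j, Or.inr ⟨Prod.swap q, ?_, Prod.swap_swap q⟩⟩
          rw [cpairs, Finset.mem_filter, Finset.mem_product, Finset.mem_sdiff]
          have h2 : q.2 ∈ Θs j := by tauto
          exact ⟨⟨h2, hq1, h1⟩, nbrs_symm.1 hadj⟩
      · rintro ⟨k, hk | ⟨r, hr, rfl⟩⟩
        · rw [cpairs, Finset.mem_filter, Finset.mem_product, Finset.mem_sdiff] at hk
          obtain ⟨⟨h1, h2, h3⟩, hadj⟩ := hk
          refine ⟨⟨⟨hΘB k _ h1, h2⟩, hadj⟩, ?_⟩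
          have := hPdiff h1 h3 (mem_nbrs_iff.1 hadj)
          tauto
        · rw [cpairs, Finset.mem_filter, Finset.mem_product, Finset.mem_sdiff] at hr
          obtain ⟨⟨h1, h2, h3⟩, hadj⟩ := hr
          refine ⟨⟨⟨h2, hΘB k _ h1⟩, nbrs_symm.1 hadj⟩, ?_⟩
          have := hPdiff h1 h3 (mem_nbrs_iff.1 hadj)
          simp only [Prod.fst_swap, Prod.snd_swap]
          tauto
    rw [hEeq]
    -- disjointness of the pieces
    have hpd : ((Finset.univ : Finset (Fin p)) : Set (Fin p)).PairwiseDisjoint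
        (fun k => cpairs l (Θs k) ∪ (cpairs l (Θs k)).image Prod.swap) := by
      intro j _ k _ hjk
      refine Finset.disjoint_left.2 fun q hqj hqk => ?_
      simp only [Finset.mem_union, Finset.mem_image] at hqj hqk
      have unfold1 : ∀ (m : Fin p) (r : Site × Site), r ∈ cpairs l (Θs m) →
          r.1 ∈ Θs m ∧ r.2 ∉ Θs m ∧ d1 r.1 r.2 = 1 := by
        intro m r hr
        rw [cpairs, Finset.mem_filter, Finset.mem_product, Finset.mem_sdiff] at hr
        exact ⟨hr.1.1, hr.1.2.2, mem_nbrs_iff.1 hr.2⟩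
      have getk : (q.1 ∈ Θs k ∧ q.2 ∉ Θs k ∧ d1 q.1 q.2 = 1)
          ∨ (q.2 ∈ Θs k ∧ q.1 ∉ Θs k ∧ d1 q.2 q.1 = 1) := by
        rcases hqk with h | ⟨r, hr, rfl⟩
        · exact Or.inl (unfold1 k q h)
        · have := unfold1 k r hr
          exact Or.inr (by simpa using this)
      have getj : (q.1 ∈ Θs j ∧ q.2 ∉ Θs j) ∨ (q.2 ∈ Θs j ∧ q.1 ∉ Θs j) := by
        rcases hqj with h | ⟨r, hr, rfl⟩
        · have := unfold1 j q h
          exact Or.inl ⟨this.1, this.2.1⟩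
        · have := unfold1 j r hr
          exact Or.inr (by simpa using ⟨this.1, this.2.1⟩)
      rcases getk with ⟨h1, h2, h3⟩ | ⟨h1, h2, h3⟩
      · have := famA3 hC hinj hσ hε h1 h2 h3 hjk
        tauto
      · have := famA3 hC hinj hσ hε h1 h2 h3 hjk
        tauto
    rw [Finset.sum_biUnion hpd, Finset.mul_sum]
    refine Finset.sum_congr rfl fun k _ => ?_
    have hval : ∀ r ∈ cpairs l (Θs k), ((σ r.1 * σ r.2 : ℤ) : ℝ) = -1 := by
      intro r hr
      rw [cpairs, Finset.mem_filter, Finset.mem_product, Finset.mem_sdiff] at hr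
      obtain ⟨⟨h1, h2, h3⟩, hadj⟩ := hr
      obtain ⟨hs1, hs2⟩ := hspin h1 h3 h2 (mem_nbrs_iff.1 hadj)
      rw [hs1, hs2]
      rcases hε with rfl | rfl <;> norm_num
    have hdisj : Disjoint (cpairs l (Θs k)) ((cpairs l (Θs k)).image Prod.swap) := by
      refine Finset.disjoint_left.2 fun q hq hq' => ?_
      rw [cpairs, Finset.mem_filter, Finset.mem_product, Finset.mem_sdiff] at hq
      obtain ⟨r, hr, rfl⟩ := Finset.mem_image.1 hq'
      rw [cpairs, Finset.mem_filter, Finset.mem_product, Finset.mem_sdiff] at hr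
      exact hq.1.2.2 (by simpa using hr.1.1)
    rw [Finset.sum_union hdisj, Finset.sum_image
      (fun q1 _ q2 _ h => Prod.swap_injective h)]
    have e1 : ∑ q ∈ cpairs l (Θs k), (-2) * ((σ q.1 * σ q.2 : ℤ) : ℝ)
        = ∑ _q ∈ cpairs l (Θs k), (2 : ℝ) := by
      refine Finset.sum_congr rfl fun q hq => ?_
      rw [hval q hq]
      norm_num
    have e2 : ∑ q ∈ cpairs l (Θs k),
        (-2) * ((σ (Prod.swap q).1 * σ (Prod.swap q).2 : ℤ) : ℝ)
        = ∑ _q ∈ cpairs l (Θs k), (2 : ℝ) := by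
      refine Finset.sum_congr rfl fun q hq => ?_
      simp only [Prod.fst_swap, Prod.snd_swap]
      rw [mul_comm (σ q.2), hval q hq]
      norm_num
    rw [e1, e2, Finset.sum_const]
    push_cast
    ring
  -- assemble
  show Ham l ω σ - Ham l ω τ = _
  rw [Ham, Ham]
  linear_combination (1/2 : ℝ) * claimA + claimB

end HamCalc

lemma mem_contourOf_iff {Θ : Finset Site} {e : DBond} :
    e ∈ contourOf Θ ↔ ∃ x ∈ Θ, ∃ y ∈ nbrs x, y ∉ Θ ∧ e = dualBond x y := by
  simp only [contourOf, Finset.mem_biUnion, Finset.mem_image, Finset.mem_filter]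
  constructor
  · rintro ⟨x, hx, y, ⟨hy1, hy2⟩, rfl⟩
    exact ⟨x, hx, y, hy1, hy2, rfl⟩
  · rintro ⟨x, hx, y, hy1, hy2, rfl⟩
    exact ⟨x, hx, y, ⟨hy1, hy2⟩, rfl⟩

lemma mem_boxBdry {l : ℕ} {x y : Site} (hx : x ∈ lamBox l) (hy : y ∈ nbrs x)
    (hyB : y ∉ lamBox l) : dualBond x y ∈ boxBdry l :=
  mem_contourOf_iff.2 ⟨x, hx, y, hy, hyB, rfl⟩

lemma mem_extW_iff {l : ℕ} {Θ : Finset Site} {y : Site} :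
    y ∈ extW l Θ ↔ ∃ x ∈ Θ, y ∈ nbrs x ∧ y ∉ lamBox l := by
  simp only [extW, Finset.mem_biUnion, Finset.mem_filter]

/-- Pairs of a region with an exterior neighbour. -/
noncomputable def epairs (l : ℕ) (Θ : Finset Site) : Finset (Site × Site) :=
  (Θ ×ˢ extW l Θ).filter fun q => q.2 ∈ nbrs q.1

lemma contour_subset_images {l : ℕ} {Θ : Finset Site} (hΘB : ∀ x ∈ Θ, x ∈ lamBox l) :
    contourOf Θ ⊆ ((cpairs l Θ).image fun q => dualBond q.1 q.2)
      ∪ ((epairs l Θ).image fun q => dualBond q.1 q.2) := by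
  intro e he
  obtain ⟨x, hx, y, hy, hyΘ, rfl⟩ := mem_contourOf_iff.1 he
  rw [Finset.mem_union, Finset.mem_image, Finset.mem_image]
  by_cases hyB : y ∈ lamBox l
  · exact Or.inl ⟨(x, y), by
      rw [cpairs, Finset.mem_filter, Finset.mem_product, Finset.mem_sdiff]
      exact ⟨⟨hx, hyB, hyΘ⟩, hy⟩, rfl⟩
  · exact Or.inr ⟨(x, y), by
      rw [epairs, Finset.mem_filter, Finset.mem_product]
      exact ⟨⟨hx, mem_extW_iff.2 ⟨x, hx, hy, hyB⟩⟩, hy⟩, rfl⟩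

lemma card_epairs_le {l : ℕ} {Θ : Finset Site} (hΘB : ∀ x ∈ Θ, x ∈ lamBox l) :
    (epairs l Θ).card ≤ (extW l Θ).card := by
  refine Finset.card_le_card_of_injOn Prod.snd ?_ ?_
  · intro q hq
    rw [Finset.mem_coe, epairs, Finset.mem_filter, Finset.mem_product] at hq
    exact hq.1.2
  · intro q1 h1 q2 h2 he
    rw [Finset.mem_coe, epairs, Finset.mem_filter, Finset.mem_product] at h1 h2
    have hy1 := mem_extW_iff.1 h1.1.2
    obtain ⟨-, -, -, hyB⟩ : ∃ x ∈ Θ, q1.2 ∈ nbrs x ∧ q1.2 ∉ lamBox l := hy1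
    have : q1.1 = q2.1 := by
      apply uniq_box_nbr (l := l) (y := q1.2) hyB (hΘB _ h1.1.1) (hΘB _ h2.1.1)
        (mem_nbrs_iff.1 h1.2)
      rw [he]
      exact mem_nbrs_iff.1 h2.2
    exact Prod.ext this he

lemma card_contour_le {l : ℕ} {Θ : Finset Site} (hΘB : ∀ x ∈ Θ, x ∈ lamBox l) :
    (contourOf Θ).card ≤ (cpairs l Θ).card + (extW l Θ).card := by
  calc (contourOf Θ).card
      ≤ (((cpairs l Θ).image fun q => dualBond q.1 q.2)
          ∪ ((epairs l Θ).image fun q => dualBond q.1 q.2)).card :=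
        Finset.card_le_card (contour_subset_images hΘB)
    _ ≤ ((cpairs l Θ).image fun q => dualBond q.1 q.2).card
          + ((epairs l Θ).image fun q => dualBond q.1 q.2).card := Finset.card_union_le _ _
    _ ≤ (cpairs l Θ).card + (extW l Θ).card :=
        Nat.add_le_add (Finset.card_image_le) (le_trans Finset.card_image_le
          (card_epairs_le hΘB))

lemma card_interior_le {l : ℕ} {Θ : Finset Site} (hΘB : ∀ x ∈ Θ, x ∈ lamBox l) :
    (contourOf Θ \ boxBdry l).card ≤ (cpairs l Θ).card := by
  refine le_trans (Finset.card_le_card ?_) (Finset.card_image_le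
    (s := cpairs l Θ) (f := fun q => dualBond q.1 q.2))
  intro e he
  rw [Finset.mem_sdiff] at he
  obtain ⟨x, hx, y, hy, hyΘ, rfl⟩ := mem_contourOf_iff.1 he.1
  have hyB : y ∈ lamBox l := by
    by_contra hyB
    exact he.2 (mem_boxBdry (hΘB x hx) hy hyB)
  rw [Finset.mem_image]
  exact ⟨(x, y), by
    rw [cpairs, Finset.mem_filter, Finset.mem_product, Finset.mem_sdiff]
    exact ⟨⟨hx, hyB, hyΘ⟩, hy⟩, rfl⟩
/-- Under the mixing condition with constant `δ < 1` on intervals of length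
`≥ δl`, for non-crossing (ε)-contours `γ₁,…,γ_p` at `σ` and an interval `I` with
`∪_j I(γ_j) ⊆ I` and `δl ≤ |I| ≤ ∑_j |γ̲_j| + c`, one has
`(1/2)Δ_{γ₁,…,γ_p}H^ω(σ) ≥ ε₀ max{l, ∑_j |γ_j|} - c` with `ε₀ > 0` depending only on `δ`. -/
theorem stmt8 (δ : ℝ) (hδ0 : 0 < δ) (hδ1 : δ < 1) :
    ∃ ε₀ > (0 : ℝ), ∀ l : ℕ, ∀ ω : Site → ℝ,
      (∀ y ∈ extBdry l, |ω y| ≤ 1) →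
      (∀ I : Finset Site, IsBdryInterval l I → δ * l ≤ (I.card : ℝ) →
        |∑ y ∈ I, ω y| ≤ δ * I.card) →
      ∀ σ : Site → ℤ, (∀ x ∈ lamBox l, σ x = 1 ∨ σ x = -1) →
      ∀ ε : ℤ, (ε = 1 ∨ ε = -1) →
      ∀ p : ℕ, ∀ Θs : Fin p → Finset Site, ∀ γu : Fin p → Finset DBond,
      ∀ Θt : Fin p → Finset Site,
      (∀ j, IsEContour l σ ε (Θs j)) → Function.Injective Θs →
      (∀ j, NonCrossing l (contourOf (Θs j))) →
      (∀ j, UnderlineData l (Θs j) (γu j) (Θt j)) →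
      ∀ c : ℝ, 0 ≤ c →
      ∀ I : Finset Site, IsBdryInterval l I →
      (∀ j, (↑(Vex l (gammaBar l (Θt j))) : Set Site) ⊆ (↑I : Set Site)) →
      δ * l ≤ (I.card : ℝ) → (I.card : ℝ) ≤ (∑ j, ((γu j).card : ℝ)) + c →
      (1/2 : ℝ) * dH l ω (List.ofFn Θs) σ ≥
        ε₀ * max (l : ℝ) (∑ j, ((contourOf (Θs j)).card : ℝ)) - c := by
  classical
  refine ⟨min (δ * (1 - δ) / 2) ((1 - δ) / 4), ?_, ?_⟩
  · apply lt_min <;> nlinarith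
  intro l ω hω1 hmix σ hσb ε hε p Θs γu Θt hcont hinj hnc hud c hc I hI hVexI hIl hIu
  set ε₀ := min (δ * (1 - δ) / 2) ((1 - δ) / 4) with hε₀
  choose Cs hCs using hcont
  have hC : ∀ j, IsCluster l σ ε (Cs j) ∧ (↑(Θs j) : Set Site) = fill (Cs j) := hCs
  have hΘB : ∀ k, ∀ x ∈ Θs k, x ∈ lamBox l := fun k x hx =>
    fill_subset_box (hC k).1 (hC k).2 hx
  have hWdisj : ((Finset.univ : Finset (Fin p)) : Set (Fin p)).PairwiseDisjoint
      (fun k => extW l (Θs k)) := by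
    intro j _ k _ hjk
    refine Finset.disjoint_left.2 fun y hyj hyk => ?_
    obtain ⟨xj, hxj, hyj1, hyB⟩ := mem_extW_iff.1 hyj
    obtain ⟨xk, hxk, hyk1, -⟩ := mem_extW_iff.1 hyk
    have hx : xk = xj :=
      uniq_box_nbr hyB (hΘB _ _ hxk) (hΘB _ _ hxj) (mem_nbrs_iff.1 hyk1)
        (mem_nbrs_iff.1 hyj1)
    subst hx
    exact famA4 hC hinj hxk hyB (mem_nbrs_iff.1 hyk1) hjk hxj
  set W : Finset Site := Finset.univ.biUnion (fun k => extW l (Θs k)) with hW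
  have hWI : W ⊆ I := by
    intro y hy
    rw [hW, Finset.mem_biUnion] at hy
    obtain ⟨k, -, hy⟩ := hy
    obtain ⟨x, hx, hynb, hyB⟩ := mem_extW_iff.1 hy
    have hud' := hud k
    have hΘΘt : Θs k ⊆ Θt k := hud'.2.2.2.1
    have hΘtB : Θt k ⊆ lamBox l := hud'.2.2.2.2.1
    have hyVex : y ∈ Vex l (gammaBar l (Θt k)) := by
      rw [Vex, Finset.mem_biUnion]
      refine ⟨x, hΘB k x hx, ?_⟩
      rw [Finset.mem_filter]
      refine ⟨hynb, hyB, ?_⟩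
      rw [gammaBar, Finset.mem_inter]
      exact ⟨mem_boxBdry (hΘB k x hx) hynb hyB,
        mem_contourOf_iff.2 ⟨x, hΘΘt hx, y, hynb, fun h => hyB (hΘtB h), rfl⟩⟩
    exact Finset.mem_coe.1 (hVexI k (Finset.mem_coe.2 hyVex))
  set SW := ∑ y ∈ W, ω y with hSW
  have hsumW : ∑ k, ∑ y ∈ extW l (Θs k), ω y = SW := (Finset.sum_biUnion hWdisj).symm
  set iS := ∑ k, ((cpairs l (Θs k)).card : ℝ) with hiS
  set wS := ∑ k, ((extW l (Θs k)).card : ℝ) with hwS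
  have hWcard : (W.card : ℝ) = wS := by
    rw [hW, Finset.card_biUnion (fun j _ k _ hjk => hWdisj (Finset.mem_coe.2 (Finset.mem_univ j))
      (Finset.mem_coe.2 (Finset.mem_univ k)) hjk)]
    push_cast
    rfl
  have hdh : (1/2:ℝ) * dH l ω (List.ofFn Θs) σ = iS - (ε:ℝ) * SW := by
    rw [dH_formula hC hinj hσb hε ω, hsumW]
    have h2i : ∑ k, 2*((cpairs l (Θs k)).card:ℝ) = 2 * iS := by
      rw [hiS, Finset.mul_sum]
    rw [h2i]
    ring
  have hUle : ∑ j, ((γu j).card : ℝ) ≤ iS := by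
    rw [hiS]
    refine Finset.sum_le_sum fun k _ => ?_
    have h1 : (γu k).card ≤ (contourOf (Θs k) \ boxBdry l).card :=
      Finset.card_le_card (hud k).1
    have h2 := card_interior_le (hΘB k)
    exact_mod_cast le_trans h1 h2
  have hSle : ∑ j, ((contourOf (Θs j)).card : ℝ) ≤ iS + wS := by
    rw [hiS, hwS, ← Finset.sum_add_distrib]
    refine Finset.sum_le_sum fun k _ => ?_
    exact_mod_cast card_contour_le (hΘB k)
  have hωI : ∀ y ∈ I, |ω y| ≤ 1 := fun y hy => hω1 y (hI.1 (Finset.mem_coe.2 hy))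
  have habs1 : |SW| ≤ wS := by
    rw [hSW, ← hWcard]
    calc |∑ y ∈ W, ω y| ≤ ∑ y ∈ W, |ω y| := Finset.abs_sum_le_sum_abs _ _
      _ ≤ ∑ _y ∈ W, (1:ℝ) := Finset.sum_le_sum (fun y hy => hωI y (hWI hy))
      _ = W.card := by simp
  have hwle : wS ≤ (I.card:ℝ) := by
    rw [← hWcard]
    exact_mod_cast Finset.card_le_card hWI
  have habs2 : |SW| ≤ δ * I.card + ((I.card:ℝ) - wS) := by
    have hIω := hmix I hI hIl
    have hsplit : ∑ y ∈ I \ W, ω y + SW = ∑ y ∈ I, ω y := Finset.sum_sdiff hWI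
    have hIWcard : (((I \ W).card : ℕ) : ℝ) = (I.card:ℝ) - wS := by
      rw [Finset.card_sdiff_of_subset hWI, ← hWcard]
      push_cast [Finset.card_le_card hWI]
      ring
    have h2 : |∑ y ∈ I \ W, ω y| ≤ (I.card:ℝ) - wS := by
      calc |∑ y ∈ I \ W, ω y| ≤ ∑ y ∈ I \ W, |ω y| := Finset.abs_sum_le_sum_abs _ _
        _ ≤ ∑ _y ∈ I \ W, (1:ℝ) := Finset.sum_le_sum
            (fun y hy => hωI y (Finset.mem_sdiff.1 hy).1)
        _ = ((I \ W).card : ℝ) := by simp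
        _ = (I.card:ℝ) - wS := hIWcard
    calc |SW| = |(∑ y ∈ I, ω y) + (- ∑ y ∈ I \ W, ω y)| := by
          rw [← hsplit]; ring_nf
      _ ≤ |∑ y ∈ I, ω y| + |(- ∑ y ∈ I \ W, ω y)| := abs_add_le _ _
      _ = |∑ y ∈ I, ω y| + |∑ y ∈ I \ W, ω y| := by rw [abs_neg]
      _ ≤ δ * I.card + ((I.card:ℝ) - wS) := add_le_add hIω h2
  have hkey : -((ε:ℝ) * SW) ≥ -|SW| := by
    rcases hε with rfl | rfl
    · push_cast
      simpa using neg_le_neg (le_abs_self SW)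
    · push_cast
      simpa using neg_abs_le SW
  have g1 : (1/2:ℝ) * dH l ω (List.ofFn Θs) σ
      ≥ iS - (δ * I.card + ((I.card:ℝ) - wS)) := by
    rw [hdh]; linarith [hkey, habs2]
  have g2 : (1/2:ℝ) * dH l ω (List.ofFn Θs) σ ≥ iS - wS := by
    rw [hdh]; linarith [hkey, habs1]
  have hiS0 : (0:ℝ) ≤ iS := Finset.sum_nonneg fun k _ => by positivity
  have hwS0 : (0:ℝ) ≤ wS := Finset.sum_nonneg fun k _ => by positivity
  have hS0 : (0:ℝ) ≤ ∑ j, ((contourOf (Θs j)).card : ℝ) :=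
    Finset.sum_nonneg fun k _ => by positivity
  have hl0 : (0:ℝ) ≤ (l:ℝ) := Nat.cast_nonneg l
  have hc0 : (0:ℝ) ≤ c := hc
  have hU0 : (0:ℝ) ≤ ∑ j, ((γu j).card : ℝ) := Finset.sum_nonneg fun k _ => by positivity
  have hIc_le : (I.card:ℝ) ≤ iS + c := le_trans hIu (by linarith)
  have h2D : 2 * ((1/2:ℝ) * dH l ω (List.ofFn Θs) σ) ≥ (1-δ)*iS - (1+δ)*c := by
    have hd : δ * (I.card:ℝ) ≤ δ * (iS + c) :=
      mul_le_mul_of_nonneg_left hIc_le hδ0.le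
    linarith [g1, g2, hd, hIc_le]
  have hiS_lb : δ*(l:ℝ) - c ≤ iS := by linarith
  have goalL : ε₀ * (l:ℝ) - c ≤ (1/2:ℝ) * dH l ω (List.ofFn Θs) σ := by
    have e1 : (1-δ)*(δ*(l:ℝ) - c) ≤ (1-δ)*iS :=
      mul_le_mul_of_nonneg_left hiS_lb (by linarith)
    have e2 : ε₀ * (l:ℝ) ≤ (δ*(1-δ)/2) * (l:ℝ) :=
      mul_le_mul_of_nonneg_right (min_le_left _ _) hl0
    linarith [h2D, e1, e2]
  have goalS : ε₀ * (∑ j, ((contourOf (Θs j)).card : ℝ)) - c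
      ≤ (1/2:ℝ) * dH l ω (List.ofFn Θs) σ := by
    set Ssum := ∑ j, ((contourOf (Θs j)).card : ℝ) with hSsum
    have eS : Ssum ≤ 2*iS + c := by linarith
    have e1 : (1-δ)*((Ssum - c)/2) ≤ (1-δ)*iS :=
      mul_le_mul_of_nonneg_left (by linarith) (by linarith)
    have e2 : ε₀ * Ssum ≤ ((1-δ)/4) * Ssum :=
      mul_le_mul_of_nonneg_right (min_le_right _ _) hS0
    linarith [h2D, e1, e2, mul_nonneg hc0 (by linarith : (0:ℝ) ≤ 1 - δ)]
  rcases le_total ((l:ℕ):ℝ) (∑ j, ((contourOf (Θs j)).card : ℝ)) with h | h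
  · rw [max_eq_right h]
    linarith [goalS]
  · rw [max_eq_left h]
    linarith [goalL]
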